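/- arXiv:1104.5612 — 2 statements merged into one kernel-verified Lean document; each statement's English description precedes it below -/
import Mathlib

section
/- Let g ∈ AC((0,T)) satisfy g(t) = 1/t + o(t) as t → 0⁺ (so that g(s) - 1/s is bounded near 0). Define φ(t) = t·exp(∫₀ᵗ (g(s) - 1/s) ds) for t ∈ (0,T) and φ(0) = 0. Then φ is C¹ on [0,T), φ(0) = 0, φ'(0) = 1, φ > 0 on (0,T), and φ'(t) = g(t)φ(t) for t ∈ (0,T). -/
open Set MeasureTheory Filter Topology intervalIntegral

/-- Integrating-factor construction: if `g(t) = 1/t + o(1)` as `t → 0⁺` (with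
`g(s) - 1/s` integrable near `0`), then `φ(t) = t·exp(∫₀ᵗ (g(s) - 1/s) ds)`
satisfies `φ(0) = 0`, `φ'(0) = 1`, `φ > 0` on `(0,T)`, `φ' = gφ` on `(0,T)`,
and `φ` is `C¹` on `[0,T)` (its derivative extends continuously to `0`). -/
theorem integrating_factor
    (g : ℝ → ℝ) (T : ℝ) (hT : 0 < T)
    -- g ∈ AC((0,T)) (in particular continuous on (0,T))
    (hgcont : ContinuousOn g (Ioo 0 T))
    -- asymptotic behaviour: g(t) - 1/t → 0 as t → 0⁺ (in particular bounded near 0)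
    (hgasymp : Tendsto (fun t => g t - 1 / t) (𝓝[>] 0) (𝓝 0))
    -- integrability of g(s) - 1/s near 0
    (hgint : ∀ t ∈ Ioo 0 T, IntervalIntegrable (fun s => g s - 1 / s) volume 0 t) :
    ∀ φ : ℝ → ℝ, (∀ t, φ t = t * Real.exp (∫ s in (0:ℝ)..t, (g s - 1 / s))) →
      φ 0 = 0 ∧
      -- φ is C¹ on [0,T) with φ'(0) = 1 and φ' = gφ on (0,T)
      ∃ φ' : ℝ → ℝ, ContinuousOn φ' (Ico 0 T) ∧ φ' 0 = 1 ∧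
        HasDerivWithinAt φ (φ' 0) (Ici 0) 0 ∧
        ∀ t ∈ Ioo 0 T, HasDerivAt φ (φ' t) t ∧ 0 < φ t ∧ φ' t = g t * φ t := by
  intro φ hφ
  have hφeq : φ = fun t => t * Real.exp (∫ s in (0:ℝ)..t, (g s - 1 / s)) := funext hφ
  subst hφeq
  set h : ℝ → ℝ := fun s => g s - 1 / s with hh
  set F : ℝ → ℝ := fun t => ∫ s in (0:ℝ)..t, h s with hF
  have hF0 : F 0 = 0 := by simp [hF]
  -- continuity of h on Ioo
  have hhcont : ContinuousOn h (Ioo 0 T) := by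
    apply hgcont.sub
    exact continuousOn_const.div continuousOn_id (fun x hx => ne_of_gt hx.1)
  -- F tends to 0 at 0+
  have hFtend : Tendsto F (𝓝[>] 0) (𝓝 0) := by
    rw [Metric.tendsto_nhdsWithin_nhds] at hgasymp ⊢
    intro ε hε
    obtain ⟨δ, hδ, hδ'⟩ := hgasymp (ε / 2) (by linarith)
    refine ⟨min δ (min T 1), by positivity, ?_⟩
    intro t ht htd
    have ht0 : 0 < t := ht
    rw [Real.dist_eq, sub_zero] at htd ⊢
    rw [abs_of_pos ht0] at htd
    have htT : t < T := lt_of_lt_of_le (lt_of_lt_of_le htd (min_le_right _ _)) (min_le_left _ _)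
    have ht1 : t < 1 := lt_of_lt_of_le (lt_of_lt_of_le htd (min_le_right _ _)) (min_le_right _ _)
    have htδ : t < δ := lt_of_lt_of_le htd (min_le_left _ _)
    have hbound : ∀ x ∈ Set.uIoc (0:ℝ) t, ‖h x‖ ≤ ε / 2 := by
      intro x hx
      rw [Set.uIoc_of_le ht0.le] at hx
      have hx0 : 0 < x := hx.1
      have hxδ : x < δ := lt_of_le_of_lt hx.2 htδ
      have := hδ' (x := x) hx0 (by rw [Real.dist_eq, sub_zero, abs_of_pos hx0]; exact hxδ)
      rw [Real.dist_eq, sub_zero] at this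
      exact le_of_lt this
    have := intervalIntegral.norm_integral_le_of_norm_le_const (f := h) (C := ε / 2)
      (a := 0) (b := t) hbound
    rw [sub_zero, abs_of_pos ht0] at this
    calc |F t| ≤ ε / 2 * t := this
      _ < ε / 2 * 1 := by apply mul_lt_mul_of_pos_left ht1; linarith
      _ < ε := by linarith
  -- FTC : derivative of F on Ioo
  have hFderiv : ∀ t ∈ Ioo 0 T, HasDerivAt F (h t) t := by
    intro t ht
    apply intervalIntegral.integral_hasDerivAt_right (hgint t ht)
    · exact ContinuousOn.stronglyMeasurableAtFilter isOpen_Ioo hhcont t ht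
    · exact hhcont.continuousAt (isOpen_Ioo.mem_nhds ht)
  -- Continuity of F on Ico
  have hFcont : ContinuousOn F (Ico 0 T) := by
    intro x hx
    rcases eq_or_lt_of_le hx.1 with hx0 | hx0
    · subst hx0
      apply ContinuousWithinAt.mono _ (Ico_subset_Ici_self)
      rw [← continuousWithinAt_Ioi_iff_Ici]
      unfold ContinuousWithinAt
      rw [hF0]
      exact hFtend
    · exact ((hFderiv x ⟨hx0, hx.2⟩).continuousAt).continuousWithinAt
  refine ⟨by simp, fun t => (1 + t * h t) * Real.exp (F t), ?_, ?_, ?_, ?_⟩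
  · -- continuity of φ'
    intro x hx
    rcases eq_or_lt_of_le hx.1 with hx0 | hx0
    · subst hx0
      apply ContinuousWithinAt.mono _ (Ico_subset_Ici_self)
      rw [← continuousWithinAt_Ioi_iff_Ici]
      unfold ContinuousWithinAt
      have h1 : Tendsto (fun t : ℝ => t * h t) (𝓝[>] 0) (𝓝 0) := by
        have : Tendsto (fun t : ℝ => t) (𝓝[>] 0) (𝓝 0) :=
          tendsto_id.mono_left nhdsWithin_le_nhds
        simpa using this.mul hgasymp
      have h2 : Tendsto (fun t : ℝ => Real.exp (F t)) (𝓝[>] 0) (𝓝 1) := by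
        have := (Real.continuous_exp.tendsto 0).comp hFtend
        simpa [Function.comp_def] using this
      have := ((tendsto_const_nhds (x := (1:ℝ))).add h1).mul h2
      simpa [hF0] using this
    · have hFc : ContinuousAt F x := (hFderiv x ⟨hx0, hx.2⟩).continuousAt
      have hhc : ContinuousAt h x := hhcont.continuousAt (isOpen_Ioo.mem_nhds ⟨hx0, hx.2⟩)
      exact (((continuousAt_const.add (continuousAt_id.mul hhc)).mul
        (Real.continuous_exp.continuousAt.comp hFc))).continuousWithinAt
  · simp [hF0, hh]
  · -- derivative at 0 from the right
    have : (fun t : ℝ => (1 + t * h t) * Real.exp (F t)) 0 = 1 := by simp [hF0, hh]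
    rw [this]
    rw [hasDerivWithinAt_iff_tendsto_slope, Ici_sdiff_left]
    have key : Tendsto (fun t : ℝ => Real.exp (F t)) (𝓝[>] 0) (𝓝 1) := by
      have := (Real.continuous_exp.tendsto 0).comp hFtend
      simpa [Function.comp_def] using this
    apply key.congr'
    filter_upwards [self_mem_nhdsWithin] with t (ht : 0 < t)
    rw [slope_def_field]
    field_simp
    rw [zero_mul, sub_zero, sub_zero, mul_div_cancel_left₀ _ ht.ne']
  · intro t ht
    have hF' := hFderiv t ht
    have hexp : HasDerivAt (fun u => Real.exp (F u)) (Real.exp (F t) * h t) t := hF'.exp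
    have hprod : HasDerivAt (fun u => id u * Real.exp (F u))
        (1 * Real.exp (F t) + id t * (Real.exp (F t) * h t)) t := (hasDerivAt_id t).mul hexp
    constructor
    · convert hprod using 1
      simp only [id]
      ring
      simp only [id]
      ring
    refine ⟨by simpa using mul_pos ht.1 (Real.exp_pos (F t)), ?_⟩
    have htne : t ≠ 0 := ne_of_gt ht.1
    simp only [hh]
    field_simp
    ring
end

section
/- Let A be a symmetric endomorphism of an n-dimensional real inner product space with eigenvalues k₁,…,k_n. Define Hₖ by C(n,k)·Hₖ = (-1)^k·Sₖ where Sₖ is the k-th elementary symmetric polynomial of the kᵢ, and define Newton transformations P₀ = I, Pₖ = C(n,k)Hₖ·I + A∘Pₖ₋₁. Then Tr(Pₖ) = cₖHₖ where cₖ = (n-k)·C(n,k). -/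
open Finset

theorem newton_aux_lem1 (n : ℕ) (ev : Fin n → ℝ) (i : Fin n) (k : ℕ) :
    ∑ s ∈ powersetCard (k+1) (univ : Finset (Fin n)), ∏ j ∈ s, ev j =
    (∑ s ∈ powersetCard (k+1) (univ.erase i), ∏ j ∈ s, ev j) +
    ev i * ∑ s ∈ powersetCard k (univ.erase i), ∏ j ∈ s, ev j := by
  have h : (univ : Finset (Fin n)) = insert i (univ.erase i) := by simp
  conv_lhs => rw [h, powersetCard_succ_insert (notMem_erase _ _)]
  rw [Finset.sum_union, Finset.sum_image]
  · congr 1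
    rw [Finset.mul_sum]
    refine Finset.sum_congr rfl fun s hs => ?_
    rw [Finset.prod_insert]
    exact fun hi => (notMem_erase i univ) ((mem_powersetCard.1 hs).1 hi)
  · intro s hs t ht hst
    have hi : i ∉ s := fun hi => (notMem_erase i univ) ((mem_powersetCard.1 hs).1 hi)
    have hi' : i ∉ t := fun hi => (notMem_erase i univ) ((mem_powersetCard.1 ht).1 hi)
    rw [← erase_insert hi, ← erase_insert hi', hst]
  · rw [Finset.disjoint_left]
    intro s hs hs'
    obtain ⟨t, ht, rfl⟩ := Finset.mem_image.1 hs'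
    exact (notMem_erase i univ) ((mem_powersetCard.1 hs).1 (mem_insert_self i t))

theorem newton_aux_lem2 (n : ℕ) (ev : Fin n → ℝ) (k : ℕ) :
    ∑ i, ∑ s ∈ powersetCard k ((univ : Finset (Fin n)).erase i), ∏ j ∈ s, ev j =
    (n - k : ℕ) * ∑ s ∈ powersetCard k (univ : Finset (Fin n)), ∏ j ∈ s, ev j := by
  have key : ∀ i : Fin n, powersetCard k ((univ : Finset (Fin n)).erase i)
      = (powersetCard k (univ : Finset (Fin n))).filter (fun s => i ∉ s) := by
    intro i; ext s
    simp [mem_powersetCard, subset_erase, and_assoc, and_comm]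
  have key2 : ∀ i : Fin n, ∑ s ∈ powersetCard k ((univ : Finset (Fin n)).erase i), ∏ j ∈ s, ev j
      = ∑ s ∈ powersetCard k (univ : Finset (Fin n)), if i ∉ s then ∏ j ∈ s, ev j else 0 := by
    intro i; rw [key i, Finset.sum_filter]
  simp_rw [key2]
  rw [Finset.sum_comm, Finset.mul_sum]
  refine Finset.sum_congr rfl fun s hs => ?_
  rw [Finset.sum_ite, Finset.sum_const, Finset.sum_const_zero, add_zero, nsmul_eq_mul]
  congr 2
  have : univ.filter (fun x => x ∉ s) = sᶜ := by ext x; simp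
  rw [this, Finset.card_compl, Fintype.card_fin, (mem_powersetCard.1 hs).2]

theorem newton_aux_trace
    {E : Type*} [NormedAddCommGroup E] [InnerProductSpace ℝ E] [FiniteDimensional ℝ E]
    (n : ℕ) (b : OrthonormalBasis (Fin n) ℝ E) (f : E →ₗ[ℝ] E) (c : Fin n → ℝ)
    (h : ∀ i, f (b i) = c i • b i) : LinearMap.trace ℝ E f = ∑ i, c i := by
  rw [LinearMap.trace_eq_matrix_trace ℝ b.toBasis, Matrix.trace]
  congr 1; ext i
  simp [Matrix.diag, LinearMap.toMatrix_apply, h]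

/-- Trace identity for Newton transformations: `Tr(Pₖ) = cₖ Hₖ` with
`cₖ = (n-k)·C(n,k)`, where `A` is a symmetric endomorphism of an `n`-dimensional
real inner product space with eigenvalues `k₁,…,kₙ`, `C(n,j)·Hⱼ = (-1)ʲ Sⱼ`
(`Sⱼ` the elementary symmetric functions of the eigenvalues), and
`P₀ = I`, `Pⱼ = C(n,j)Hⱼ·I + A∘Pⱼ₋₁`. -/
theorem trace_newton_transformation
    {E : Type*} [NormedAddCommGroup E] [InnerProductSpace ℝ E] [FiniteDimensional ℝ E]
    (n : ℕ) (hdim : Module.finrank ℝ E = n)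
    (A : E →ₗ[ℝ] E)
    (hA : ∀ x y : E, inner ℝ (A x) y = (inner ℝ x (A y) : ℝ))
    -- the eigenvalues of A, realized by an orthonormal eigenbasis
    (ev : Fin n → ℝ) (b : OrthonormalBasis (Fin n) ℝ E)
    (hev : ∀ i, A (b i) = ev i • b i)
    -- the higher order mean curvatures: C(n,j)·Hⱼ = (-1)ʲ·Sⱼ
    (H : ℕ → ℝ)
    (hH : ∀ j, H j = (-1) ^ j *
      (∑ s ∈ Finset.powersetCard j (Finset.univ : Finset (Fin n)), ∏ i ∈ s, ev i) /
      (n.choose j))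
    -- the Newton transformations
    (P : ℕ → (E →ₗ[ℝ] E))
    (hP0 : P 0 = LinearMap.id)
    (hPrec : ∀ j : ℕ, P (j + 1) =
      ((n.choose (j + 1) : ℝ) * H (j + 1)) • LinearMap.id + A ∘ₗ P j) :
    ∀ k ≤ n, LinearMap.trace ℝ E (P k) = ((n - k) * n.choose k : ℕ) * H k := by
  -- notation
  set S : ℕ → ℝ := fun j =>
    ∑ s ∈ powersetCard j (univ : Finset (Fin n)), ∏ i ∈ s, ev i with hS
  set T : ℕ → Fin n → ℝ := fun j i =>
    ∑ s ∈ powersetCard j ((univ : Finset (Fin n)).erase i), ∏ x ∈ s, ev x with hT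
  -- C(n,j) * H j = (-1)^j * S j when j ≤ n
  have hCH : ∀ j ≤ n, (n.choose j : ℝ) * H j = (-1) ^ j * S j := by
    intro j hj
    have hc : (n.choose j : ℝ) ≠ 0 := by
      exact_mod_cast (Nat.choose_pos hj).ne'
    rw [hH j]
    field_simp
    rfl
  -- eigenvalue formula for P k, for k ≤ n
  have hPk : ∀ k ≤ n, ∀ i, P k (b i) = ((-1) ^ k * T k i) • b i := by
    intro k
    induction k with
    | zero =>
      intro _ i
      simp [hP0, hT, Finset.powersetCard_zero]
    | succ k ih =>
      intro hk i
      have hk' : k ≤ n := Nat.le_of_succ_le hk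
      rw [hPrec k]
      simp only [LinearMap.add_apply, LinearMap.smul_apply, LinearMap.id_apply,
        LinearMap.comp_apply, ih hk' i]
      rw [map_smul, hev i, hCH (k + 1) hk]
      rw [smul_smul, ← add_smul]
      congr 1
      have := newton_aux_lem1 n ev i k
      have hS1 : S (k + 1) = T (k + 1) i + ev i * T k i := this
      rw [hS1]
      ring
  intro k hk
  rw [newton_aux_trace n b (P k) (fun i => (-1) ^ k * T k i) (hPk k hk)]
  rw [← Finset.mul_sum]
  have h2 : ∑ i, T k i = ((n - k : ℕ) : ℝ) * S k := by
    have := newton_aux_lem2 n ev k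
    exact_mod_cast this
  rw [h2]
  have hc : (n.choose k : ℝ) ≠ 0 := by
    exact_mod_cast (Nat.choose_pos hk).ne'
  have := hCH k hk
  push_cast
  rw [hH k]
  field_simp
  ring
end
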